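/- For every finite d-dimensional MDP D = (S, s_init, A, δ, w) (with w : A → ℕ^d, every coordinate of every weight ≥ 1) and every multi-constraint percentile query given by q constraints (T_i ⊆ S, k_i ∈ {1,…,d}, ℓ_i ∈ ℕ, α_i ∈ [0,1] ∩ ℚ) for i ∈ {1,…,q}: if there exists a strategy σ with P^σ(TS^{T_i}_{k_i} ≤ ℓ_i) ≥ α_i for every i, then there exists a (randomized) strategy σ' satisfying the same q inequalities whose choice after a history h = s₁a₁…s_n depends only on s_n together with, for each i ∈ {1,…,q}, the pair consisting of min(ℓ_i+1, Σ_{j=1}^{n-1} w_{k_i}(a_j)) and the Boolean recording whether some state of T_i occurs in h; in particular, a randomized finite-memory strategy suffices. -/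
import Mathlib


open scoped NNReal ENNReal

/-- A finite Markov decision process: finite state space `S`, finite action space `A`,
an initial state, a nonempty set of available actions in each state, and a probabilistic
transition function (a probability distribution over successors for each available action). -/
structure MDP (S A : Type) [Fintype S] [Fintype A] where
  init : S
  avail : S → Finset A
  avail_nonempty : ∀ s, (avail s).Nonempty
  tr : S → A → S → ℝ≥0
  tr_sum : ∀ s a, a ∈ avail s → ∑ s' : S, tr s a s' = 1

section Core

variable {S A : Type} [Fintype S] [Fintype A]

/-- A history `s₁ a₁ s₂ a₂ … a_{n-1} s_n` (with `s₁ = init`) is encoded as the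
list of steps `[(a₁, s₂), …, (a_{n-1}, s_n)]`. -/
def lastState (M : MDP S A) (h : List (A × S)) : S :=
  (h.getLast?).elim M.init Prod.snd

/-- A (randomized, history-dependent) strategy: to every history it assigns a
probability distribution over actions. -/
abbrev Strat (S A : Type) := List (A × S) → A → ℝ≥0

/-- The distributions prescribed by a strategy are supported on available actions and
sum up to one. -/
def IsStrategy (M : MDP S A) (σ : Strat S A) : Prop :=
  ∀ h : List (A × S),
    (∀ a, a ∉ M.avail (lastState M h) → σ h a = 0) ∧ ∑ a : A, σ h a = 1

/-- A strategy is pure if it always prescribes a Dirac distribution. -/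
def IsPure (σ : Strat S A) : Prop := ∀ h, ∃ a, σ h a = 1

/-- A strategy is memoryless if its choice only depends on the last state of the history. -/
def IsMemoryless (M : MDP S A) (σ : Strat S A) : Prop :=
  ∀ h h' : List (A × S), lastState M h = lastState M h' → σ h = σ h'

/-- Probability of traversing exactly the steps of the second list, after having already
traversed the history `pre`, when playing strategy `σ`:
the product `∏ σ(prefix)(aᵢ) · δ(sᵢ, aᵢ)(sᵢ₊₁)`. -/
def probFrom (M : MDP S A) (σ : Strat S A) : List (A × S) → List (A × S) → ℝ≥0
  | _, [] => 1
  | pre, (a, s') :: rest =>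
      σ pre a * M.tr (lastState M pre) a s' * probFrom M σ (pre ++ [(a, s')]) rest

/-- Probability of the cylinder of a history under strategy `σ`. -/
def probHist (M : MDP S A) (σ : Strat S A) (h : List (A × S)) : ℝ≥0 :=
  probFrom M σ [] h

/-- The sequence of states `s₁ s₂ … s_n` of a history. -/
def stateSeq (M : MDP S A) (h : List (A × S)) : List S :=
  M.init :: h.map Prod.snd

/-- The history visits the target set `T` exactly at its last state (first visit). -/
def Hits (M : MDP S A) (T : Finset S) (h : List (A × S)) : Prop :=
  (stateSeq M h).getLast (by simp [stateSeq]) ∈ T ∧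
    ∀ s ∈ (stateSeq M h).dropLast, s ∉ T

/-- Accumulated weight (truncated sum) along a history. -/
def tsHist (w : A → ℕ) (h : List (A × S)) : ℕ := (h.map fun p => w p.1).sum

/-- `P^σ ( TS^T ≤ ℓ )`: since all weights are strictly positive, the event
`TS^T ≤ ℓ` is the disjoint union of the cylinders of the histories that hit `T`
at their last state with accumulated weight at most `ℓ`. -/
noncomputable def probTSLe (M : MDP S A) (σ : Strat S A) (w : A → ℕ) (T : Finset S)
    (ℓ : ℕ) : ℝ≥0∞ :=
  ∑' h : {h : List (A × S) // Hits M T h ∧ tsHist w h ≤ ℓ}, (probHist M σ h.1 : ℝ≥0∞)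

/-- `P^σ ( TS^T = ∞ )`: the probability of never reaching `T`. -/
noncomputable def probNoReach (M : MDP S A) (σ : Strat S A) (T : Finset S) : ℝ≥0∞ :=
  1 - ∑' h : {h : List (A × S) // Hits M T h}, (probHist M σ h.1 : ℝ≥0∞)

/-- `E^σ ( TS^T )`, valued in `[0, ∞]`: the truncated sum is determined at the first
visit of `T`, and takes value `∞` on the (measurable) set of runs never reaching `T`. -/
noncomputable def expTS (M : MDP S A) (σ : Strat S A) (w : A → ℕ) (T : Finset S) : ℝ≥0∞ :=
  (∑' h : {h : List (A × S) // Hits M T h},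
      (probHist M σ h.1 : ℝ≥0∞) * (tsHist w h.1 : ℝ≥0∞))
    + probNoReach M σ T * ⊤

/-- A run is encoded as the infinite sequence of its steps `(aᵢ, sᵢ₊₁)`;
`stateAt M ρ n` is the `(n+1)`-st state `s_{n+1}` of the run (`s₁ = init`). -/
def stateAt (M : MDP S A) (ρ : ℕ → A × S) : ℕ → S
  | 0 => M.init
  | n + 1 => (ρ n).2

/-- The run is consistent with strategy `σ`: every step uses an available action, chosen
with positive probability by `σ`, and leads to a successor of positive transition
probability. -/
def Consistent (M : MDP S A) (σ : Strat S A) (ρ : ℕ → A × S) : Prop :=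
  ∀ n : ℕ, (ρ n).1 ∈ M.avail (stateAt M ρ n) ∧
    0 < σ (List.ofFn fun i : Fin n => ρ i) (ρ n).1 ∧
    0 < M.tr (stateAt M ρ n) (ρ n).1 (ρ n).2

open Classical in
/-- Truncated sum `TS^T` of a run: the accumulated weight up to the first visit of `T`,
and `∞` if `T` is never visited. -/
noncomputable def tsRun (M : MDP S A) (w : A → ℕ) (T : Finset S)
    (ρ : ℕ → A × S) : ℝ≥0∞ :=
  if h : ∃ n, stateAt M ρ n ∈ T then
    ((∑ i ∈ Finset.range (Nat.find h), w (ρ i).1 : ℕ) : ℝ≥0∞)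
  else ⊤

end Core

section Aux
set_option linter.unusedSectionVars false

open Classical

variable {S A : Type} [Fintype S] [Fintype A]

theorem length_le_sum_of_one_le (l : List ℕ) (h : ∀ x ∈ l, 1 ≤ x) :
    l.length ≤ l.sum := by
  induction l with
  | nil => simp
  | cons a t ih =>
    have h1 := h a (by simp)
    have h2 := ih (fun x hx => h x (by simp [hx]))
    simp only [List.length_cons, List.sum_cons]
    omega

theorem tsHist_append (w : A → ℕ) (h : List (A × S)) (x : A × S) :
    tsHist w (h ++ [x]) = tsHist w h + w x.1 := by simp [tsHist]

theorem tsHist_length_le (w : A → ℕ) (hw : ∀ a, 1 ≤ w a) (h : List (A × S)) :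
    h.length ≤ tsHist w h := by
  have := length_le_sum_of_one_le (h.map fun p => w p.1) (by
    intro x hx
    simp only [List.mem_map] at hx
    obtain ⟨p, _, rfl⟩ := hx
    exact hw _)
  simpa [tsHist] using this

theorem stateSeq_append (M : MDP S A) (h : List (A × S)) (x : A × S) :
    stateSeq M (h ++ [x]) = stateSeq M h ++ [x.2] := by simp [stateSeq]

theorem lastState_append (M : MDP S A) (h : List (A × S)) (x : A × S) :
    lastState M (h ++ [x]) = x.2 := by
  simp [lastState]

theorem probFrom_append_singleton (M : MDP S A) (σ : Strat S A)
    (pre l : List (A × S)) (x : A × S) :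
    probFrom M σ pre (l ++ [x]) =
      probFrom M σ pre l * (σ (pre ++ l) x.1 * M.tr (lastState M (pre ++ l)) x.1 x.2) := by
  obtain ⟨a, s'⟩ := x
  induction l generalizing pre with
  | nil => simp [probFrom]
  | cons y t ih =>
    obtain ⟨b, u⟩ := y
    simp only [List.cons_append, probFrom]
    show _ * probFrom M σ _ (t ++ [(a, s')]) = _
    rw [ih (pre ++ [(b, u)])]
    simp only [List.append_assoc, List.singleton_append]
    ring

theorem probHist_append (M : MDP S A) (σ : Strat S A) (h : List (A × S)) (x : A × S) :
    probHist M σ (h ++ [x]) =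
      probHist M σ h * (σ h x.1 * M.tr (lastState M h) x.1 x.2) := by
  have := probFrom_append_singleton M σ [] h x
  simpa [probHist] using this

end Aux

section Aux2

open Classical

set_option linter.unusedSectionVars false

variable {S A : Type} [Fintype S] [Fintype A]
variable (M : MDP S A) {d : ℕ} (w : A → Fin d → ℕ) {q : ℕ}
  (T : Fin q → Finset S) (k : Fin q → Fin d) (ℓ : Fin q → ℕ)

/-- Memory state: last state, saturated counters, visit booleans. -/
noncomputable def memOf (h : List (A × S)) : S × (Fin q → ℕ) × (Fin q → Bool) :=
  ⟨lastState M h, fun i => min (ℓ i + 1) (tsHist (fun a => w a (k i)) h),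
    fun i => decide (∃ s ∈ stateSeq M h, s ∈ T i)⟩

noncomputable def updOf (m : S × (Fin q → ℕ) × (Fin q → Bool)) (x : A × S) :
    S × (Fin q → ℕ) × (Fin q → Bool) :=
  ⟨x.2, fun i => min (ℓ i + 1) (m.2.1 i + w x.1 (k i)),
    fun i => m.2.2 i || decide (x.2 ∈ T i)⟩

theorem memOf_fst (h : List (A × S)) : (memOf M w T k ℓ h).1 = lastState M h := rfl

theorem memOf_append (hw : ∀ a k, 1 ≤ w a k) (h : List (A × S)) (x : A × S) :
    memOf M w T k ℓ (h ++ [x]) = updOf w T k ℓ (memOf M w T k ℓ h) x := by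
  unfold memOf updOf
  refine Prod.ext (lastState_append M h x) (Prod.ext ?_ ?_)
  · funext i
    simp only [tsHist_append]
    have := hw x.1 (k i)
    omega
  · funext i
    simp only
    have hiff : (∃ s ∈ stateSeq M (h ++ [x]), s ∈ T i) ↔
        ((∃ s ∈ stateSeq M h, s ∈ T i) ∨ x.2 ∈ T i) := by
      rw [stateSeq_append]; simp [or_comm]
    rw [decide_eq_decide.mpr hiff]; exact Bool.decide_or _ _

/-- A memory state is active if some constraint is still undecided and reachable. -/
def ActiveM (m : S × (Fin q → ℕ) × (Fin q → Bool)) : Prop :=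
  ∃ i : Fin q, m.2.2 i = false ∧ m.2.1 i ≤ ℓ i

/-- bound on lengths of relevant histories -/
def bnd : ℕ := (Finset.univ.sup ℓ) + 1

/-- All histories of length at most `bnd`. -/
noncomputable def LEfin : Finset (List (A × S)) :=
  (List.finite_length_le (A × S) (bnd ℓ)).toFinset

theorem mem_LEfin (h : List (A × S)) : h ∈ LEfin (S := S) (A := A) ℓ ↔ h.length ≤ bnd ℓ := by
  simp [LEfin]

theorem active_length_lt (hw : ∀ a k, 1 ≤ w a k) (h : List (A × S))
    (hm : ActiveM ℓ (memOf M w T k ℓ h)) : h.length < bnd ℓ := by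
  obtain ⟨i, _, hc⟩ := hm
  simp only [memOf] at hc
  have hts : tsHist (fun a => w a (k i)) h ≤ ℓ i := by omega
  have hlen := tsHist_length_le (fun a => w a (k i)) (fun a => hw a (k i)) h
  have : ℓ i ≤ Finset.univ.sup ℓ := Finset.le_sup (Finset.mem_univ i)
  simp only [bnd]; omega

end Aux2

section Aux3

open scoped Classical

set_option linter.unusedSectionVars false

variable {S A : Type} [Fintype S] [Fintype A]
variable (M : MDP S A) {d : ℕ} (w : A → Fin d → ℕ) {q : ℕ}
  (T : Fin q → Finset S) (k : Fin q → Fin d) (ℓ : Fin q → ℕ)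

/-- total probability of the histories with a given memory state -/
noncomputable def Phi (τ : Strat S A) (m : S × (Fin q → ℕ) × (Fin q → Bool)) : ℝ≥0 :=
  ∑ h ∈ (LEfin ℓ).filter (fun h => memOf M w T k ℓ h = m), probHist M τ h

/-- numerator of the conditional action distribution at a memory state -/
noncomputable def Nnum (σ : Strat S A) (m : S × (Fin q → ℕ) × (Fin q → Bool)) (a : A) : ℝ≥0 :=
  ∑ h ∈ (LEfin ℓ).filter (fun h => memOf M w T k ℓ h = m), probHist M σ h * σ h a

noncomputable def defAct (s : S) : A := (M.avail_nonempty s).choose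

theorem defAct_mem (s : S) : defAct M s ∈ M.avail s := (M.avail_nonempty s).choose_spec

/-- conditional action distribution at a memory state -/
noncomputable def choiceOf (σ : Strat S A) (m : S × (Fin q → ℕ) × (Fin q → Bool)) : A → ℝ≥0 :=
  if ActiveM ℓ m ∧ Phi M w T k ℓ σ m ≠ 0 then
    fun a => Nnum M w T k ℓ σ m a / Phi M w T k ℓ σ m
  else fun a => if a = defAct M m.1 then 1 else 0

/-- the memory-based strategy -/
noncomputable def sigma' (σ : Strat S A) : Strat S A :=
  fun h => choiceOf M w T k ℓ σ (memOf M w T k ℓ h)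

theorem lastState_of_memOf {h : List (A × S)} {m} (hm : memOf M w T k ℓ h = m) :
    lastState M h = m.1 := by rw [← hm]; rfl

theorem Nnum_eq_zero (σ : Strat S A) (m) (hΦ : Phi M w T k ℓ σ m = 0) (a : A) :
    Nnum M w T k ℓ σ m a = 0 := by
  unfold Phi at hΦ
  rw [Finset.sum_eq_zero_iff] at hΦ
  unfold Nnum
  exact Finset.sum_eq_zero fun h hh => by rw [hΦ h hh, zero_mul]

theorem sum_Nnum (σ : Strat S A) (hσ : IsStrategy M σ) (m) :
    ∑ a : A, Nnum M w T k ℓ σ m a = Phi M w T k ℓ σ m := by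
  unfold Nnum Phi
  rw [Finset.sum_comm]
  refine Finset.sum_congr rfl fun h _ => ?_
  rw [← Finset.mul_sum, (hσ h).2, mul_one]

theorem choiceOf_support (σ : Strat S A) (hσ : IsStrategy M σ) (m) (a : A)
    (ha : a ∉ M.avail m.1) : choiceOf M w T k ℓ σ m a = 0 := by
  unfold choiceOf
  split
  · have : Nnum M w T k ℓ σ m a = 0 := by
      refine Finset.sum_eq_zero fun h hh => ?_
      rw [Finset.mem_filter] at hh
      have := (hσ h).1 a (by rw [lastState_of_memOf M w T k ℓ hh.2]; exact ha)
      rw [this, mul_zero]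
    simp [this]
  · have : a ≠ defAct M m.1 := fun h => ha (h ▸ defAct_mem M m.1)
    simp [this]

theorem choiceOf_sum (σ : Strat S A) (hσ : IsStrategy M σ) (m) :
    ∑ a : A, choiceOf M w T k ℓ σ m a = 1 := by
  unfold choiceOf
  by_cases h : ActiveM ℓ m ∧ Phi M w T k ℓ σ m ≠ 0
  · rw [if_pos h]
    rw [← Finset.sum_div, sum_Nnum M w T k ℓ σ hσ, div_self h.2]
  · rw [if_neg h]
    simp only [Finset.sum_ite_eq']
    simp

theorem isStrategy_sigma' (σ : Strat S A) (hσ : IsStrategy M σ) :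
    IsStrategy M (sigma' M w T k ℓ σ) := by
  intro h
  constructor
  · intro a ha
    exact choiceOf_support M w T k ℓ σ hσ _ a (by rw [memOf_fst]; exact ha)
  · exact choiceOf_sum M w T k ℓ σ hσ _

theorem phi_mul_choice (σ : Strat S A) (m)
    (hΦ : Phi M w T k ℓ (sigma' M w T k ℓ σ) m = Phi M w T k ℓ σ m)
    (hact : ActiveM ℓ m) (a : A) :
    Phi M w T k ℓ (sigma' M w T k ℓ σ) m * choiceOf M w T k ℓ σ m a
      = Nnum M w T k ℓ σ m a := by
  by_cases h0 : Phi M w T k ℓ σ m = 0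
  · rw [hΦ, h0, zero_mul, Nnum_eq_zero M w T k ℓ σ m h0]
  · rw [hΦ]
    unfold choiceOf
    rw [if_pos ⟨hact, h0⟩]
    exact mul_div_cancel₀ _ h0

end Aux3

section Aux4

open scoped Classical

set_option linter.unusedSectionVars false

variable {S A : Type} [Fintype S] [Fintype A]
variable (M : MDP S A) {d : ℕ} (w : A → Fin d → ℕ) {q : ℕ}
  (T : Fin q → Finset S) (k : Fin q → Fin d) (ℓ : Fin q → ℕ)

theorem snoc_sum (f : List (A × S) → ℝ≥0) (Q : List (A × S) → Prop)
    (cond : (S × (Fin q → ℕ) × (Fin q → Bool)) → A × S → Prop)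
    (hQnil : ¬ Q [])
    (hQiff : ∀ h' ∈ LEfin (S := S) (A := A) ℓ, ∀ x : A × S,
      Q (h' ++ [x]) ↔ cond (memOf M w T k ℓ h') x)
    (hlen : ∀ h' ∈ LEfin (S := S) (A := A) ℓ, ∀ x : A × S,
      cond (memOf M w T k ℓ h') x → (h' ++ [x]).length ≤ bnd ℓ) :
    ∑ h ∈ (LEfin ℓ).filter Q, f h
      = ∑ h' ∈ LEfin ℓ, ∑ x : A × S,
          if cond (memOf M w T k ℓ h') x then f (h' ++ [x]) else 0 := by
  have hre : ∑ h' ∈ LEfin ℓ, ∑ x : A × S,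
        (if cond (memOf M w T k ℓ h') x then f (h' ++ [x]) else 0)
      = ∑ p ∈ ((LEfin ℓ) ×ˢ (Finset.univ : Finset (A × S))).filter
            (fun p => cond (memOf M w T k ℓ p.1) p.2), f (p.1 ++ [p.2]) := by
    rw [Finset.sum_filter, Finset.sum_product]
  rw [hre]
  refine Finset.sum_bij'
    (i := fun h hh => (h.dropLast, h.getLast (by
      rintro rfl
      exact hQnil (Finset.mem_filter.mp hh).2)))
    (j := fun p _ => p.1 ++ [p.2]) ?_ ?_ ?_ ?_ ?_
  · intro h hh
    rw [Finset.mem_filter] at hh ⊢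
    obtain ⟨hle, hQ⟩ := hh
    rw [mem_LEfin] at hle
    have hdl : h.dropLast ∈ LEfin (S := S) (A := A) ℓ := by
      rw [mem_LEfin, List.length_dropLast]; omega
    refine ⟨Finset.mem_product.mpr ⟨hdl, Finset.mem_univ _⟩, ?_⟩
    rw [← hQiff _ hdl, List.dropLast_append_getLast]
    exact hQ
  · intro p hp
    rw [Finset.mem_filter] at hp ⊢
    obtain ⟨hmem, hc⟩ := hp
    obtain ⟨h1, _⟩ := Finset.mem_product.mp hmem
    refine ⟨?_, (hQiff _ h1 _).mpr hc⟩
    rw [mem_LEfin]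
    exact hlen _ h1 _ hc
  · intro h hh
    exact List.dropLast_append_getLast _
  · intro p hp
    refine Prod.ext ?_ ?_
    · simp [List.dropLast_concat]
    · simp [List.getLast_concat]
  · intro h hh
    rw [List.dropLast_append_getLast]

end Aux4

section Aux5

open scoped Classical

set_option linter.unusedSectionVars false
set_option maxHeartbeats 1000000

variable {S A : Type} [Fintype S] [Fintype A]
variable (M : MDP S A) {d : ℕ} (w : A → Fin d → ℕ) {q : ℕ}
  (T : Fin q → Finset S) (k : Fin q → Fin d) (ℓ : Fin q → ℕ)

theorem probHist_nil (τ : Strat S A) : probHist M τ [] = 1 := rfl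

theorem memOf_snd_le (h : List (A × S)) (j : Fin q) :
    (memOf M w T k ℓ h).2.1 j ≤ ℓ j + 1 := by
  simp [memOf]

theorem phi_recursion (τ : Strat S A) (hw : ∀ a k, 1 ≤ w a k) (m)
    (hact : ActiveM ℓ m) :
    Phi M w T k ℓ τ m = (if memOf M w T k ℓ [] = m then 1 else 0)
      + ∑ h' ∈ LEfin ℓ, ∑ x : A × S,
          if updOf w T k ℓ (memOf M w T k ℓ h') x = m
            then probHist M τ (h' ++ [x]) else 0 := by
  have hsplit := Finset.sum_filter_add_sum_filter_not
    ((LEfin ℓ).filter (fun h => memOf M w T k ℓ h = m)) (fun h => h = [])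
    (probHist M τ)
  unfold Phi
  rw [← hsplit]
  congr 1
  · have hset : (((LEfin ℓ).filter (fun h => memOf M w T k ℓ h = m)).filter
        (fun h => h = []))
        = if memOf M w T k ℓ [] = m then {([] : List (A × S))} else ∅ := by
      ext l
      by_cases hm0 : memOf M w T k ℓ ([] : List (A × S)) = m
      · simp only [if_pos hm0, Finset.mem_filter, Finset.mem_singleton, mem_LEfin]
        constructor
        · rintro ⟨⟨-, -⟩, h⟩; exact h
        · rintro rfl; exact ⟨⟨by simp, hm0⟩, rfl⟩
      · simp only [if_neg hm0, Finset.notMem_empty, iff_false, Finset.mem_filter]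
        rintro ⟨⟨-, hm⟩, rfl⟩
        exact hm0 hm
    rw [hset]
    split
    · simp [probHist_nil]
    · simp
  · rw [Finset.filter_filter]
    have hs := snoc_sum M w T k ℓ (probHist M τ)
      (fun h => memOf M w T k ℓ h = m ∧ ¬ h = [])
      (fun m' x => updOf w T k ℓ m' x = m) (by simp) ?_ ?_
    · convert hs using 2
      · congr!
      · congr!
    · intro h' hh' x
      show (memOf M w T k ℓ (h' ++ [x]) = m ∧ ¬(h' ++ [x]) = []) ↔ _
      rw [memOf_append M w T k ℓ hw]
      simp
    · intro h' hh' x hc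
      have hm : memOf M w T k ℓ (h' ++ [x]) = m := by
        rw [memOf_append M w T k ℓ hw]; exact hc
      have := active_length_lt M w T k ℓ hw (h' ++ [x]) (by rw [hm]; exact hact)
      omega

theorem fib_sum (σ : Strat S A) (hσ : IsStrategy M σ) (a : A)
    (pred : (S × (Fin q → ℕ) × (Fin q → Bool)) → Prop)
    (c : (S × (Fin q → ℕ) × (Fin q → Bool)) → ℝ≥0)
    (hp : ∀ h ∈ LEfin (S := S) (A := A) ℓ, pred (memOf M w T k ℓ h) →
      ActiveM ℓ (memOf M w T k ℓ h) ∧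
        Phi M w T k ℓ (sigma' M w T k ℓ σ) (memOf M w T k ℓ h)
          = Phi M w T k ℓ σ (memOf M w T k ℓ h)) :
    ∑ h ∈ LEfin ℓ, (if pred (memOf M w T k ℓ h) then
        probHist M (sigma' M w T k ℓ σ) h *
          (sigma' M w T k ℓ σ h a * c (memOf M w T k ℓ h)) else 0)
      = ∑ h ∈ LEfin ℓ, (if pred (memOf M w T k ℓ h) then
          probHist M σ h * (σ h a * c (memOf M w T k ℓ h)) else 0) := by
  rw [← Finset.sum_fiberwise_of_maps_to (g := memOf M w T k ℓ)
      (t := (LEfin ℓ).image (memOf M w T k ℓ))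
      (fun h hh => Finset.mem_image_of_mem _ hh),
    ← Finset.sum_fiberwise_of_maps_to (g := memOf M w T k ℓ)
      (t := (LEfin ℓ).image (memOf M w T k ℓ))
      (fun h hh => Finset.mem_image_of_mem _ hh)]
  refine Finset.sum_congr rfl fun m' hm' => ?_
  obtain ⟨h₀, hh₀, hmh₀⟩ := Finset.mem_image.mp hm'
  by_cases hpred : pred m'
  · obtain ⟨hact, hΦ⟩ := by
      have := hp h₀ hh₀ (by rw [hmh₀]; exact hpred)
      rwa [hmh₀] at this
    have e1 : ∑ h ∈ (LEfin ℓ).filter (fun h => memOf M w T k ℓ h = m'),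
        (if pred (memOf M w T k ℓ h) then
          probHist M (sigma' M w T k ℓ σ) h *
            (sigma' M w T k ℓ σ h a * c (memOf M w T k ℓ h)) else 0)
        = (∑ h ∈ (LEfin ℓ).filter (fun h => memOf M w T k ℓ h = m'),
            probHist M (sigma' M w T k ℓ σ) h) *
          (choiceOf M w T k ℓ σ m' a * c m') := by
      rw [Finset.sum_mul]
      refine Finset.sum_congr rfl fun h hh => ?_
      have hmem := (Finset.mem_filter.mp hh).2
      rw [hmem, if_pos hpred]
      show _ * (choiceOf M w T k ℓ σ (memOf M w T k ℓ h) a * _) = _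
      rw [hmem]
    have e2 : ∑ h ∈ (LEfin ℓ).filter (fun h => memOf M w T k ℓ h = m'),
        (if pred (memOf M w T k ℓ h) then
          probHist M σ h * (σ h a * c (memOf M w T k ℓ h)) else 0)
        = Nnum M w T k ℓ σ m' a * c m' := by
      unfold Nnum
      rw [Finset.sum_mul]
      refine Finset.sum_congr rfl fun h hh => ?_
      have hmem := (Finset.mem_filter.mp hh).2
      rw [hmem, if_pos hpred, ← mul_assoc]
    rw [e1, e2]
    have : (∑ h ∈ (LEfin ℓ).filter (fun h => memOf M w T k ℓ h = m'),
        probHist M (sigma' M w T k ℓ σ) h) = Phi M w T k ℓ (sigma' M w T k ℓ σ) m' := rfl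
    rw [this, ← mul_assoc, phi_mul_choice M w T k ℓ σ m' hΦ hact a]
  · refine Finset.sum_congr rfl fun h hh => ?_
    have hmem := (Finset.mem_filter.mp hh).2
    rw [hmem, if_neg hpred, if_neg hpred]

end Aux5

section Aux6

open scoped Classical

set_option linter.unusedSectionVars false
set_option maxHeartbeats 1000000

variable {S A : Type} [Fintype S] [Fintype A]
variable (M : MDP S A) {d : ℕ} (w : A → Fin d → ℕ) {q : ℕ}
  (T : Fin q → Finset S) (k : Fin q → Fin d) (ℓ : Fin q → ℕ)

theorem reshape_sum (τ : Strat S A) (x : A × S)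
    (pred : (S × (Fin q → ℕ) × (Fin q → Bool)) → Prop) :
    ∑ h' ∈ LEfin ℓ, (if pred (memOf M w T k ℓ h') then probHist M τ (h' ++ [x]) else 0)
      = ∑ h' ∈ LEfin ℓ, (if pred (memOf M w T k ℓ h') then
          probHist M τ h' * (τ h' x.1 * M.tr (memOf M w T k ℓ h').1 x.1 x.2) else 0) := by
  refine Finset.sum_congr rfl fun h' _ => ?_
  by_cases hcond : pred (memOf M w T k ℓ h')
  · rw [if_pos hcond, if_pos hcond, probHist_append, memOf_fst]
  · rw [if_neg hcond, if_neg hcond]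

theorem phi_eq (σ : Strat S A) (hσ : IsStrategy M σ) (hw : ∀ a k, 1 ≤ w a k) :
    ∀ m, ActiveM ℓ m →
      Phi M w T k ℓ (sigma' M w T k ℓ σ) m = Phi M w T k ℓ σ m := by
  suffices H : ∀ v m, (∑ j : Fin q, m.2.1 j) = v → ActiveM ℓ m →
      Phi M w T k ℓ (sigma' M w T k ℓ σ) m = Phi M w T k ℓ σ m by
    exact fun m hm => H _ m rfl hm
  intro v
  induction v using Nat.strong_induction_on with
  | _ v IH =>
    intro m hv hact
    rw [phi_recursion M w T k ℓ _ hw m hact, phi_recursion M w T k ℓ σ hw m hact]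
    congr 1
    have key : ∀ x : A × S,
        (∑ h' ∈ LEfin ℓ, if updOf w T k ℓ (memOf M w T k ℓ h') x = m
            then probHist M (sigma' M w T k ℓ σ) (h' ++ [x]) else 0)
          = ∑ h' ∈ LEfin ℓ, if updOf w T k ℓ (memOf M w T k ℓ h') x = m
              then probHist M σ (h' ++ [x]) else 0 := by
      intro x
      have e1 : ∀ (τ : Strat S A), (∑ h' ∈ LEfin ℓ,
          if updOf w T k ℓ (memOf M w T k ℓ h') x = m
            then probHist M τ (h' ++ [x]) else 0)
          = ∑ h' ∈ LEfin ℓ, if updOf w T k ℓ (memOf M w T k ℓ h') x = m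
              then probHist M τ h' * (τ h' x.1 * M.tr (memOf M w T k ℓ h').1 x.1 x.2)
              else 0 := by
        intro τ
        refine Finset.sum_congr rfl fun h' _ => ?_
        by_cases hcond : updOf w T k ℓ (memOf M w T k ℓ h') x = m
        · rw [if_pos hcond, if_pos hcond, probHist_append, memOf_fst]
        · rw [if_neg hcond, if_neg hcond]
      rw [e1, e1]
      have hf := fib_sum M w T k ℓ σ hσ x.1 (fun m' => updOf w T k ℓ m' x = m)
        (fun m' => M.tr m'.1 x.1 x.2) (by
      intro h' hh' hpred
      obtain ⟨i, hb, hc⟩ := hact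
      rw [← hpred] at hb hc
      simp only [updOf, Bool.or_eq_false_iff, decide_eq_false_iff_not] at hb hc
      have hwx : 1 ≤ w x.1 (k i) := hw _ _
      have hb' : (memOf M w T k ℓ h').2.2 i = false := hb.1
      have hc' : (memOf M w T k ℓ h').2.1 i + w x.1 (k i) ≤ ℓ i := by omega
      have hact' : ActiveM ℓ (memOf M w T k ℓ h') := ⟨i, hb', by omega⟩
      refine ⟨hact', ?_⟩
      have hlt : (∑ j : Fin q, (memOf M w T k ℓ h').2.1 j) < v := by
        rw [← hv, ← hpred]
        refine Finset.sum_lt_sum (fun j _ => ?_) ⟨i, Finset.mem_univ i, ?_⟩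
        · have := memOf_snd_le M w T k ℓ h' j
          simp only [updOf]
          omega
        · simp only [updOf]
          omega
      exact IH _ hlt (memOf M w T k ℓ h') rfl hact')
      convert hf using 2 <;> congr!
    calc ∑ h' ∈ LEfin ℓ, ∑ x : A × S,
            (if updOf w T k ℓ (memOf M w T k ℓ h') x = m
              then probHist M (sigma' M w T k ℓ σ) (h' ++ [x]) else 0)
        = ∑ x : A × S, ∑ h' ∈ LEfin ℓ,
            (if updOf w T k ℓ (memOf M w T k ℓ h') x = m
              then probHist M (sigma' M w T k ℓ σ) (h' ++ [x]) else 0) :=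
          Finset.sum_comm
      _ = ∑ x : A × S, ∑ h' ∈ LEfin ℓ,
            (if updOf w T k ℓ (memOf M w T k ℓ h') x = m
              then probHist M σ (h' ++ [x]) else 0) :=
          Finset.sum_congr rfl fun x _ => key x
      _ = ∑ h' ∈ LEfin ℓ, ∑ x : A × S,
            (if updOf w T k ℓ (memOf M w T k ℓ h') x = m
              then probHist M σ (h' ++ [x]) else 0) := Finset.sum_comm

end Aux6

section Aux7

open scoped Classical

set_option linter.unusedSectionVars false
set_option maxHeartbeats 1000000

variable {S A : Type} [Fintype S] [Fintype A]
variable (M : MDP S A) {d : ℕ} (w : A → Fin d → ℕ) {q : ℕ}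
  (T : Fin q → Finset S) (k : Fin q → Fin d) (ℓ : Fin q → ℕ)

theorem hits_nil (Tset : Finset S) : Hits M Tset [] ↔ M.init ∈ Tset := by
  unfold Hits
  simp [stateSeq]

theorem hits_append_iff (Tset : Finset S) (h' : List (A × S)) (x : A × S) :
    Hits M Tset (h' ++ [x]) ↔ (x.2 ∈ Tset ∧ ∀ s ∈ stateSeq M h', s ∉ Tset) := by
  unfold Hits
  simp only [stateSeq_append, List.getLast_append_singleton, List.dropLast_concat]

/-- the event condition on a snoc step -/
def condOf (i : Fin q) (m' : S × (Fin q → ℕ) × (Fin q → Bool)) (x : A × S) : Prop :=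
  m'.2.2 i = false ∧ x.2 ∈ T i ∧ m'.2.1 i + w x.1 (k i) ≤ ℓ i

theorem event_eq (σ : Strat S A) (hσ : IsStrategy M σ) (hw : ∀ a k, 1 ≤ w a k)
    (i : Fin q) (hinit : M.init ∉ T i) :
    ∑ h ∈ (LEfin ℓ).filter
        (fun h => Hits M (T i) h ∧ tsHist (fun a => w a (k i)) h ≤ ℓ i),
        probHist M (sigma' M w T k ℓ σ) h
      = ∑ h ∈ (LEfin ℓ).filter
          (fun h => Hits M (T i) h ∧ tsHist (fun a => w a (k i)) h ≤ ℓ i),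
          probHist M σ h := by
  have hQnil : ¬ (Hits M (T i) ([] : List (A × S)) ∧
      tsHist (fun a => w a (k i)) ([] : List (A × S)) ≤ ℓ i) := by
    rintro ⟨hh, -⟩
    exact hinit ((hits_nil M (T i)).mp hh)
  have hQiff : ∀ h' ∈ LEfin (S := S) (A := A) ℓ, ∀ x : A × S,
      (Hits M (T i) (h' ++ [x]) ∧ tsHist (fun a => w a (k i)) (h' ++ [x]) ≤ ℓ i)
        ↔ condOf w T k ℓ i (memOf M w T k ℓ h') x := by
    intro h' _ x
    rw [hits_append_iff, tsHist_append]
    unfold condOf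
    have hwx : 1 ≤ w x.1 (k i) := hw _ _
    constructor
    · rintro ⟨⟨hx2, hnv⟩, hts⟩
      refine ⟨?_, hx2, ?_⟩
      · simp only [memOf, decide_eq_false_iff_not]
        rintro ⟨s, hs, hsT⟩
        exact hnv s hs hsT
      · simp only [memOf]
        omega
    · rintro ⟨hb, hx2, hc⟩
      simp only [memOf, decide_eq_false_iff_not] at hb
      simp only [memOf] at hc
      refine ⟨⟨hx2, fun s hs hsT => hb ⟨s, hs, hsT⟩⟩, by omega⟩
  have hlen : ∀ h' ∈ LEfin (S := S) (A := A) ℓ, ∀ x : A × S,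
      condOf w T k ℓ i (memOf M w T k ℓ h') x → (h' ++ [x]).length ≤ bnd ℓ := by
    intro h' _ x hc
    obtain ⟨-, -, hc⟩ := hc
    have hwx : 1 ≤ w x.1 (k i) := hw _ _
    simp only [memOf] at hc
    have hts : tsHist (fun a => w a (k i)) h' ≤ ℓ i := by omega
    have hlen' := tsHist_length_le (fun a => w a (k i)) (fun a => hw a (k i)) h'
    have hsup : ℓ i ≤ Finset.univ.sup ℓ := Finset.le_sup (Finset.mem_univ i)
    simp only [List.length_append, List.length_singleton, bnd]
    omega
  have efilter : ∀ τ : Strat S A,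
      ∑ h ∈ (LEfin ℓ).filter
        (fun h => Hits M (T i) h ∧ tsHist (fun a => w a (k i)) h ≤ ℓ i),
        probHist M τ h
      = ∑ h' ∈ LEfin ℓ, ∑ x : A × S,
          if condOf w T k ℓ i (memOf M w T k ℓ h') x
            then probHist M τ (h' ++ [x]) else 0 := by
    intro τ
    have hs := snoc_sum M w T k ℓ (probHist M τ)
      (fun h => Hits M (T i) h ∧ tsHist (fun a => w a (k i)) h ≤ ℓ i)
      (condOf w T k ℓ i) hQnil hQiff hlen
    convert hs using 2 <;> congr!
  rw [efilter, efilter]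
  have key : ∀ x : A × S,
      (∑ h' ∈ LEfin ℓ, if condOf w T k ℓ i (memOf M w T k ℓ h') x
          then probHist M (sigma' M w T k ℓ σ) (h' ++ [x]) else 0)
        = ∑ h' ∈ LEfin ℓ, if condOf w T k ℓ i (memOf M w T k ℓ h') x
            then probHist M σ (h' ++ [x]) else 0 := by
    intro x
    have e1 : ∀ (τ : Strat S A), (∑ h' ∈ LEfin ℓ,
        if condOf w T k ℓ i (memOf M w T k ℓ h') x
          then probHist M τ (h' ++ [x]) else 0)
        = ∑ h' ∈ LEfin ℓ, if condOf w T k ℓ i (memOf M w T k ℓ h') x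
            then probHist M τ h' * (τ h' x.1 * M.tr (memOf M w T k ℓ h').1 x.1 x.2)
            else 0 := by
      intro τ
      refine Finset.sum_congr rfl fun h' _ => ?_
      by_cases hcond : condOf w T k ℓ i (memOf M w T k ℓ h') x
      · rw [if_pos hcond, if_pos hcond, probHist_append, memOf_fst]
      · rw [if_neg hcond, if_neg hcond]
    rw [e1, e1]
    have hf := fib_sum M w T k ℓ σ hσ x.1
      (fun m' => condOf w T k ℓ i m' x)
      (fun m' => M.tr m'.1 x.1 x.2) (by
        intro h' hh' hpred
        obtain ⟨hb, hx2, hc⟩ := hpred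
        have hwx : 1 ≤ w x.1 (k i) := hw _ _
        have hact' : ActiveM ℓ (memOf M w T k ℓ h') := ⟨i, hb, by omega⟩
        exact ⟨hact', phi_eq M w T k ℓ σ hσ hw _ hact'⟩)
    convert hf using 2 <;> congr!
  calc ∑ h' ∈ LEfin ℓ, ∑ x : A × S,
          (if condOf w T k ℓ i (memOf M w T k ℓ h') x
            then probHist M (sigma' M w T k ℓ σ) (h' ++ [x]) else 0)
      = ∑ x : A × S, ∑ h' ∈ LEfin ℓ,
          (if condOf w T k ℓ i (memOf M w T k ℓ h') x
            then probHist M (sigma' M w T k ℓ σ) (h' ++ [x]) else 0) :=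
        Finset.sum_comm
    _ = ∑ x : A × S, ∑ h' ∈ LEfin ℓ,
          (if condOf w T k ℓ i (memOf M w T k ℓ h') x
            then probHist M σ (h' ++ [x]) else 0) :=
        Finset.sum_congr rfl fun x _ => key x
    _ = ∑ h' ∈ LEfin ℓ, ∑ x : A × S,
          (if condOf w T k ℓ i (memOf M w T k ℓ h') x
            then probHist M σ (h' ++ [x]) else 0) := Finset.sum_comm

theorem probTSLe_eq_sum (τ : Strat S A) (hw : ∀ a k, 1 ≤ w a k) (i : Fin q) :
    probTSLe M τ (fun a => w a (k i)) (T i) (ℓ i)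
      = ((∑ h ∈ (LEfin ℓ).filter
          (fun h => Hits M (T i) h ∧ tsHist (fun a => w a (k i)) h ≤ ℓ i),
          probHist M τ h : ℝ≥0) : ℝ≥0∞) := by
  have hsub : ∀ h : List (A × S),
      (Hits M (T i) h ∧ tsHist (fun a => w a (k i)) h ≤ ℓ i) → h.length ≤ bnd ℓ := by
    intro h hh
    have hlen' := tsHist_length_le (fun a => w a (k i)) (fun a => hw a (k i)) h
    have hsup : ℓ i ≤ Finset.univ.sup ℓ := Finset.le_sup (Finset.mem_univ i)
    simp only [bnd]
    omega
  have hfin : {h : List (A × S) |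
      Hits M (T i) h ∧ tsHist (fun a => w a (k i)) h ≤ ℓ i}.Finite :=
    (List.finite_length_le (A × S) (bnd ℓ)).subset (fun h hh => hsub h hh)
  haveI : Fintype {h : List (A × S) //
      Hits M (T i) h ∧ tsHist (fun a => w a (k i)) h ≤ ℓ i} := hfin.fintype
  unfold probTSLe
  rw [tsum_fintype]
  rw [ENNReal.coe_finset_sum]
  rw [← Finset.sum_subtype ((LEfin ℓ).filter
      (fun h => Hits M (T i) h ∧ tsHist (fun a => w a (k i)) h ≤ ℓ i))
      (fun h => by
        simp only [Finset.mem_filter, mem_LEfin]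
        constructor
        · rintro ⟨-, hh⟩; exact hh
        · intro hh; exact ⟨hsub h hh, hh⟩)
      (fun h => ((probHist M τ h : ℝ≥0) : ℝ≥0∞))]

end Aux7

/-- multi-constraint percentile queries. In a `d`-dimensional MDP with
strictly positive integer weights, if some strategy satisfies all `q` percentile
constraints `P(TS^{T i}_{k i} ≤ ℓ i) ≥ α i`, then some (randomized) strategy whose choice
only depends on the last state of the history together with, for each constraint `i`,
`min (ℓ i + 1) (accumulated weight on dimension k i)` and the Boolean recording whether
`T i` has already been visited — hence a randomized finite-memory strategy — satisfies
them as well. -/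
theorem stmt4 {S A : Type} [Fintype S] [Fintype A] (M : MDP S A)
    (d : ℕ) (w : A → Fin d → ℕ) (hw : ∀ a k, 1 ≤ w a k)
    (q : ℕ) (T : Fin q → Finset S) (k : Fin q → Fin d) (ℓ : Fin q → ℕ)
    (α : Fin q → ℚ) (hα : ∀ i, 0 ≤ α i ∧ α i ≤ 1)
    (hex : ∃ σ : Strat S A, IsStrategy M σ ∧ ∀ i : Fin q,
      ENNReal.ofReal ((α i : ℝ)) ≤ probTSLe M σ (fun a => w a (k i)) (T i) (ℓ i)) :
    ∃ σ' : Strat S A, IsStrategy M σ' ∧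
      (∀ i : Fin q,
        ENNReal.ofReal ((α i : ℝ)) ≤ probTSLe M σ' (fun a => w a (k i)) (T i) (ℓ i)) ∧
      (∀ h h' : List (A × S), lastState M h = lastState M h' →
        (∀ i : Fin q,
          min (ℓ i + 1) (tsHist (fun a => w a (k i)) h)
            = min (ℓ i + 1) (tsHist (fun a => w a (k i)) h') ∧
          ((∃ s ∈ stateSeq M h, s ∈ T i) ↔ (∃ s ∈ stateSeq M h', s ∈ T i))) →
        σ' h = σ' h') := by
  classical
  obtain ⟨σ, hσ, hcon⟩ := hex
  refine ⟨sigma' M w T k ℓ σ, isStrategy_sigma' M w T k ℓ σ hσ, ?_, ?_⟩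
  · intro i
    by_cases hinit : M.init ∈ T i
    · have helem : Hits M (T i) ([] : List (A × S)) ∧
          tsHist (fun a => w a (k i)) ([] : List (A × S)) ≤ ℓ i :=
        ⟨(hits_nil M (T i)).mpr hinit, by simp [tsHist]⟩
      have h1 : (1 : ℝ≥0∞) ≤
          probTSLe M (sigma' M w T k ℓ σ) (fun a => w a (k i)) (T i) (ℓ i) := by
        have hle := ENNReal.le_tsum (f := fun h : {h : List (A × S) //
            Hits M (T i) h ∧ tsHist (fun a => w a (k i)) h ≤ ℓ i} =>
            ((probHist M (sigma' M w T k ℓ σ) h.1 : ℝ≥0) : ℝ≥0∞)) ⟨[], helem⟩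
        simpa [probHist_nil, probTSLe] using hle
      refine le_trans ?_ h1
      rw [ENNReal.ofReal_le_one]
      exact_mod_cast (hα i).2
    · rw [probTSLe_eq_sum M w T k ℓ (sigma' M w T k ℓ σ) hw i,
        event_eq M w T k ℓ σ hσ hw i hinit,
        ← probTSLe_eq_sum M w T k ℓ σ hw i]
      exact hcon i
  · intro h h' hlast hmem
    show choiceOf M w T k ℓ σ (memOf M w T k ℓ h)
        = choiceOf M w T k ℓ σ (memOf M w T k ℓ h')
    have hmemeq : memOf M w T k ℓ h = memOf M w T k ℓ h' := by
      unfold memOf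
      refine Prod.ext ?_ (Prod.ext ?_ ?_)
      · exact hlast
      · funext i; exact (hmem i).1
      · funext i; exact decide_eq_decide.mpr (hmem i).2
    rw [hmemeq]
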